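/- Let t ≥ 1 and consider the ground set consisting of two disjoint copies of [t], written α_1,...,α_t and β_1,...,β_t. For i ∈ [t−1] let C_i = {α_{i+1},...,α_t} ∪ {β_1,...,β_i}, let C_t = {β_1,...,β_t}, for i ∈ [t−1] let D_i = {α_1,...,α_i} ∪ {β_{i+1},...,β_t}, and let D_t = {α_1,...,α_t}. Then a pair {α_v, β_w} hits all 2t sets C_1,...,C_t, D_1,...,D_t if and only if v = w. -/
import Mathlib


/-- The weak-linker set `C_i = {α_{i+1},...,α_t} ∪ {β_1,...,β_i}` (with `C_t = {β_1,...,β_t}`),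
over ground set `Fin t ⊕ Fin t` (`inl` = α, `inr` = β), 0-indexed. -/
def Cset {t : ℕ} (i : Fin t) : Set (Fin t ⊕ Fin t) :=
  Sum.inl '' {j | i < j} ∪ Sum.inr '' {j | j ≤ i}

/-- The weak-linker set `D_i = {α_1,...,α_i} ∪ {β_{i+1},...,β_t}` (with `D_t = {α_1,...,α_t}`). -/
def Dset {t : ℕ} (i : Fin t) : Set (Fin t ⊕ Fin t) :=
  Sum.inl '' {j | j ≤ i} ∪ Sum.inr '' {j | i < j}

/-- A pair `{α_v, β_w}` hits all `2t` sets `C_1,...,C_t, D_1,...,D_t`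
if and only if `v = w`. -/
theorem weak_linker_pair_iff (t : ℕ) (ht : 1 ≤ t) (v w : Fin t) :
    ((∀ i : Fin t,
        (({Sum.inl v, Sum.inr w} : Set (Fin t ⊕ Fin t)) ∩ Cset i).Nonempty) ∧
     (∀ i : Fin t,
        (({Sum.inl v, Sum.inr w} : Set (Fin t ⊕ Fin t)) ∩ Dset i).Nonempty))
    ↔ v = w := by
  constructor
  · rintro ⟨hC, hD⟩
    obtain ⟨x, hx, hCx⟩ := hC v
    obtain ⟨y, hy, hDy⟩ := hD w
    have hwv : w ≤ v := by
      rcases hx with h | h <;> subst h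
      · rcases hCx with ⟨j, hj, hj'⟩ | ⟨j, hj, hj'⟩
        · exact absurd (Sum.inl.inj hj' ▸ hj) (lt_irrefl v)
        · exact absurd hj' (by simp)
      · rcases hCx with ⟨j, hj, hj'⟩ | ⟨j, hj, hj'⟩
        · exact absurd hj' (by simp)
        · exact Sum.inr.inj hj' ▸ hj
    have hvw : v ≤ w := by
      rcases hy with h | h <;> subst h
      · rcases hDy with ⟨j, hj, hj'⟩ | ⟨j, hj, hj'⟩
        · exact Sum.inl.inj hj' ▸ hj
        · exact absurd hj' (by simp)
      · rcases hDy with ⟨j, hj, hj'⟩ | ⟨j, hj, hj'⟩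
        · exact absurd hj' (by simp)
        · exact absurd (Sum.inr.inj hj' ▸ hj) (lt_irrefl w)
    exact le_antisymm hvw hwv
  · rintro rfl
    constructor <;> intro i
    · rcases lt_or_ge i v with h | h
      · exact ⟨Sum.inl v, Or.inl rfl, Or.inl ⟨v, h, rfl⟩⟩
      · exact ⟨Sum.inr v, Or.inr rfl, Or.inr ⟨v, h, rfl⟩⟩
    · rcases le_or_gt v i with h | h
      · exact ⟨Sum.inl v, Or.inl rfl, Or.inl ⟨v, h, rfl⟩⟩
      · exact ⟨Sum.inr v, Or.inr rfl, Or.inr ⟨v, h, rfl⟩⟩
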